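/- The global function of the sand automaton S satisfies f_S ∘ f_{S^r} = id on the space of all configurations. -/

import Mathlib

/-- The extended integers `ℤ ∪ {-∞, +∞}`. -/
abbrev EZ : Type := WithBot (WithTop ℤ)

/-- Embedding of `ℤ` into the extended integers. -/
def finVal (n : ℤ) : EZ := ((n : WithTop ℤ) : EZ)

/-- The integer value of a finite extended integer (`0` on `±∞`). -/
def valZ (x : EZ) : ℤ := WithBot.recBotCoe 0 (fun y => WithTop.recTopCoe 0 id y) x

/-- The measuring device `β_l^m`. -/
noncomputable def beta (l : ℕ) (m : ℤ) (n : EZ) : EZ :=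
  if finVal (m + (l : ℤ)) < n then ⊤
  else if n < finVal (m - (l : ℤ)) then ⊥
  else WithBot.map (WithTop.map (fun k => k - m)) n

/-- Reference height: the value of `x` if finite, `0` if `x = ±∞`. -/
def refH (x : EZ) : ℤ := if x = ⊥ ∨ x = ⊤ then 0 else valZ x

/-- One-dimensional sandpile configurations. -/
abbrev Config : Type := ℤ → EZ

/-- The neighborhood sequence `d_r^i(c)`: the `2r`-tuple of measured differences. -/
noncomputable def nbhd (r : ℕ) (c : Config) (i : ℤ) : Fin (2 * r) → EZ :=
  fun j => beta r (refH (c i))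
    (c (i + (if (j : ℕ) < r then ((j : ℕ) : ℤ) - (r : ℤ) else ((j : ℕ) : ℤ) - (r : ℤ) + 1)))

/-- The global function of the sand automaton of radius `r` with local rule `lam`. -/
noncomputable def globalF (r : ℕ) (lam : (Fin (2 * r) → EZ) → ℤ) (c : Config) : Config :=
  fun i => if c i = ⊥ ∨ c i = ⊤ then c i
    else finVal (valZ (c i) + lam (nbhd r c i))

/-- Finite configurations. -/
def FiniteConf (c : Config) : Prop := ∃ k : ℕ, ∀ i : ℤ, (k : ℤ) ≤ |i| → c i = finVal 0

/-- Periodic configurations. -/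
def PeriodicConf (c : Config) : Prop := ∃ p : ℤ, p ≠ 0 ∧ ∀ i : ℤ, c (i + p) = c i


/-- The local rule of the sand automaton `S`:
`λ_S(x,y) = +1` if `x = +∞ ∧ y ≠ -∞`, `-1` if `x ≠ +∞ ∧ y = -∞`, `0` otherwise. -/
def lamS (v : Fin 2 → EZ) : ℤ :=
  if v 0 = ⊤ ∧ v 1 ≠ ⊥ then 1
  else if v 0 ≠ ⊤ ∧ v 1 = ⊥ then -1
  else 0

/-- The local rule of the sand automaton `S^r`:
`λ_{S^r}(x,y) = -1` if `x = +∞ ∧ y ≠ -∞`, `+1` if `x ≠ +∞ ∧ y = -∞`, `0` otherwise. -/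
def lamSr (v : Fin 2 → EZ) : ℤ :=
  if v 0 = ⊤ ∧ v 1 ≠ ⊥ then -1
  else if v 0 ≠ ⊤ ∧ v 1 = ⊥ then 1
  else 0

lemma EZ_cases (x : EZ) : x = ⊥ ∨ x = ⊤ ∨ ∃ k : ℤ, x = finVal k := by
  rcases x with _ | x
  · exact Or.inl rfl
  rcases x with _ | x
  · exact Or.inr (Or.inl rfl)
  · exact Or.inr (Or.inr ⟨x, rfl⟩)

@[simp] lemma finVal_lt_finVal {a b : ℤ} : finVal a < finVal b ↔ a < b := by simp [finVal]
@[simp] lemma finVal_lt_top (a : ℤ) : finVal a < ⊤ :=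
  lt_top_iff_ne_top.mpr (by simp [finVal])
@[simp] lemma bot_lt_finVal (a : ℤ) : ⊥ < finVal a := by simp [finVal]
@[simp] lemma finVal_ne_bot (a : ℤ) : finVal a ≠ ⊥ := by simp [finVal]
@[simp] lemma finVal_ne_top (a : ℤ) : finVal a ≠ ⊤ := by simp [finVal]
@[simp] lemma refH_finVal (n : ℤ) : refH (finVal n) = n := by simp [refH, valZ, finVal]
@[simp] lemma valZ_finVal (n : ℤ) : valZ (finVal n) = n := rfl
@[simp] lemma finVal_inj {a b : ℤ} : finVal a = finVal b ↔ a = b := by simp [finVal]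

lemma beta_bot (m : ℤ) : beta 1 m ⊥ = ⊥ := by
  unfold beta; rw [if_neg not_lt_bot, if_pos (bot_lt_finVal _)]

lemma beta_top (m : ℤ) : beta 1 m ⊤ = ⊤ := by
  unfold beta; rw [if_pos (finVal_lt_top _)]

lemma beta_finVal (m k : ℤ) :
    beta 1 m (finVal k) = if m + 1 < k then ⊤ else if k < m - 1 then ⊥ else finVal (k - m) := by
  unfold beta
  push_cast
  rw [show (WithBot.map (WithTop.map fun k => k - m) (finVal k)) = finVal (k - m) by
    simp [finVal]]
  simp only [finVal_lt_finVal]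

lemma beta_eq_top_iff (m : ℤ) (x : EZ) : beta 1 m x = ⊤ ↔ finVal (m + 1) < x := by
  rcases EZ_cases x with h | h | ⟨k, h⟩ <;> subst h
  · simp [beta_bot]
  · simp [beta_top]
  · rw [beta_finVal]; split_ifs with h1 h2 <;> simp <;> omega

lemma beta_eq_bot_iff (m : ℤ) (x : EZ) : beta 1 m x = ⊥ ↔ x < finVal (m - 1) := by
  rcases EZ_cases x with h | h | ⟨k, h⟩ <;> subst h
  · simp [beta_bot]
  · simp [beta_top]
  · rw [beta_finVal]; split_ifs with h1 h2 <;> simp <;> omega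

lemma nbhd_zero (c : Config) (i : ℤ) : nbhd 1 c i 0 = beta 1 (refH (c i)) (c (i - 1)) := by
  simp [nbhd]
  rw [show i + (-1:ℤ) = i - 1 by ring]

lemma nbhd_one' (c : Config) (i : ℤ) : nbhd 1 c i 1 = beta 1 (refH (c i)) (c (i + 1)) := by
  simp [nbhd]

lemma lamSr_eval (c : Config) (i : ℤ) :
    lamSr (nbhd 1 c i) =
      if finVal (refH (c i) + 1) < c (i - 1) ∧ ¬ (c (i + 1) < finVal (refH (c i) - 1)) then -1
      else if ¬ (finVal (refH (c i) + 1) < c (i - 1)) ∧ c (i + 1) < finVal (refH (c i) - 1) then 1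
      else 0 := by
  unfold lamSr
  rw [nbhd_zero, nbhd_one']
  simp only [ne_eq, beta_eq_top_iff, beta_eq_bot_iff]

lemma lamS_eval (c : Config) (i : ℤ) :
    lamS (nbhd 1 c i) =
      if finVal (refH (c i) + 1) < c (i - 1) ∧ ¬ (c (i + 1) < finVal (refH (c i) - 1)) then 1
      else if ¬ (finVal (refH (c i) + 1) < c (i - 1)) ∧ c (i + 1) < finVal (refH (c i) - 1) then -1
      else 0 := by
  unfold lamS
  rw [nbhd_zero, nbhd_one']
  simp only [ne_eq, beta_eq_top_iff, beta_eq_bot_iff]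

-- bounds on the inner update of the left neighbor (when finite)
lemma left_bound (c : Config) (i : ℤ) (n l : ℤ) (h0 : c i = finVal n) (hL : c (i - 1) = finVal l) :
    (n < l - 1 → 0 ≤ lamSr (nbhd 1 c (i - 1)) ∧ lamSr (nbhd 1 c (i - 1)) ≤ 1) ∧
    (¬ n < l - 1 → -1 ≤ lamSr (nbhd 1 c (i - 1)) ∧ lamSr (nbhd 1 c (i - 1)) ≤ 0) := by
  rw [lamSr_eval c (i - 1), show i - 1 + 1 = i by ring, h0, hL, refH_finVal]
  split_ifs with h1 h2 <;> constructor <;> intro h <;> simp_all <;> omega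

lemma right_bound (c : Config) (i : ℤ) (n r : ℤ) (h0 : c i = finVal n) (hR : c (i + 1) = finVal r) :
    (r + 1 < n → -1 ≤ lamSr (nbhd 1 c (i + 1)) ∧ lamSr (nbhd 1 c (i + 1)) ≤ 0) ∧
    (¬ r + 1 < n → 0 ≤ lamSr (nbhd 1 c (i + 1)) ∧ lamSr (nbhd 1 c (i + 1)) ≤ 1) := by
  rw [lamSr_eval c (i + 1), show i + 1 - 1 = i by ring, h0, hR, refH_finVal]
  split_ifs with h1 h2 <;> constructor <;> intro h <;> simp_all <;> omega

lemma point (c : Config) (i : ℤ) : globalF 1 lamS (globalF 1 lamSr c) i = c i := by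
  set c' := globalF 1 lamSr c with hc'
  rcases EZ_cases (c i) with h0 | h0 | ⟨n, h0⟩
  · have h1 : c' i = c i := by simp [hc', globalF, h0]
    simp [globalF, h1, h0]
  · have h1 : c' i = c i := by simp [hc', globalF, h0]
    simp [globalF, h1, h0]
  · have hci' : c' i = finVal (n + lamSr (nbhd 1 c i)) := by
      simp [hc', globalF, h0]
    have hgoal : globalF 1 lamS c' i = finVal (n + lamSr (nbhd 1 c i) + lamS (nbhd 1 c' i)) := by
      simp [globalF, hci']
    rw [hgoal, h0]
    suffices h : lamS (nbhd 1 c' i) = - lamSr (nbhd 1 c i) by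
      rw [h]; congr 1; ring
    rcases EZ_cases (c (i - 1)) with hL | hL | ⟨l, hL⟩ <;>
      rcases EZ_cases (c (i + 1)) with hR | hR | ⟨r, hR⟩
    all_goals (
      first
      | (have hL' : c' (i - 1) = c (i - 1) := by simp [hc', globalF, hL]
         rw [hL] at hL')
      | (have hL' : c' (i - 1) = finVal (l + lamSr (nbhd 1 c (i - 1))) := by
           simp [hc', globalF, hL]
         have hbL := left_bound c i n l h0 hL))
    all_goals (
      first
      | (have hR' : c' (i + 1) = c (i + 1) := by simp [hc', globalF, hR]
         rw [hR] at hR')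
      | (have hR' : c' (i + 1) = finVal (r + lamSr (nbhd 1 c (i + 1))) := by
           simp [hc', globalF, hR]
         have hbR := right_bound c i n r h0 hR))
    all_goals (
      rw [lamS_eval c' i, hci', refH_finVal, hL', hR', lamSr_eval c i, h0, refH_finVal, hL, hR] <;>
      simp only [finVal_lt_finVal, finVal_lt_top, bot_lt_finVal, not_top_lt, not_lt_bot,
        not_true, not_false_iff, true_and, and_true, false_and, and_false, if_true, if_false,
        not_lt] <;>
      first | omega | (split_ifs <;> omega))


/-- The global function of `S` composed with the global function of `S^r`
is the identity on the space of all configurations. -/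
theorem S_comp_Sr_eq_id : (globalF 1 lamS) ∘ (globalF 1 lamSr) = id := by
  funext c i
  exact point c i
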